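/- There is no 3-connected locally nonforesty graph of order 8k+3 (k ≥ 1) and size 15k+6. -/

import Mathlib

open SimpleGraph

def LocallyNonforesty {V : Type*} (G : SimpleGraph V) : Prop :=
  ∀ v : V, ¬ (G.induce (G.neighborSet v)).IsAcyclic

def ThreeConnected {V : Type*} [Fintype V] (G : SimpleGraph V) : Prop :=
  4 ≤ Fintype.card V ∧ ∀ S : Finset V, S.card ≤ 2 → (G.induce ((↑S : Set V)ᶜ)).Connected

set_option linter.unusedSectionVars false

-- helper: walks stay in closed sets
lemma walk_stay {V : Type*} {G : SimpleGraph V} (P : V → Prop)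
    (hcl : ∀ a b, G.Adj a b → P a → P b) {u w : V} (p : G.Walk u w) (hu : P u) : P w := by
  induction p with
  | nil => exact hu
  | cons h q ih => exact ih (hcl _ _ h hu)

lemma disconn {V : Type*} [Fintype V] (G : SimpleGraph V) (S : Finset V) (C : Set V)
    (hCS : ∀ c ∈ C, c ∉ S)
    (hcl : ∀ a b, G.Adj a b → a ∈ C → b ∉ S → b ∈ C)
    (u : V) (hu : u ∈ C) (w : V) (hw : w ∉ C) (hwS : w ∉ S) :
    ¬ (G.induce ((↑S : Set V)ᶜ)).Connected := by
  intro hconn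
  have hu' : u ∈ ((↑S : Set V)ᶜ) := by simpa using hCS u hu
  have hw' : w ∈ ((↑S : Set V)ᶜ) := by simpa using hwS
  obtain ⟨p⟩ := hconn.preconnected ⟨u, hu'⟩ ⟨w, hw'⟩
  have : (⟨w, hw'⟩ : ((↑S : Set V)ᶜ : Set V)).1 ∈ C := by
    refine walk_stay (G := G.induce ((↑S : Set V)ᶜ)) (fun z => z.1 ∈ C) ?_ p hu
    rintro ⟨a, ha⟩ ⟨b, hb⟩ hab hA
    exact hcl a b hab hA (by simpa using hb)
  exact hw this

lemma cyc1 {W : Type*} {H : SimpleGraph W} (h : ¬ H.IsAcyclic) :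
    ∃ a b c : W, a ≠ c ∧ H.Adj a b ∧ H.Adj b c := by
  unfold SimpleGraph.IsAcyclic at h
  push_neg at h
  obtain ⟨v, c, hc⟩ := h
  cases c with
  | nil => exact absurd hc (by simp)
  | cons h₁ q =>
    cases q with
    | nil => exact absurd hc.three_le_length (by simp)
    | cons h₂ q2 =>
      rename_i s1 s2
      refine ⟨v, s1, s2, ?_, h₁, h₂⟩
      intro hv
      cases q2 with
      | nil => exact absurd hc.three_le_length (by simp)
      | cons h₃ q3 =>
        have hnd := hc.support_nodup
        simp only [SimpleGraph.Walk.support_cons, List.tail_cons, List.nodup_cons] at hnd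
        exact hnd.2.1 (hv ▸ q3.end_mem_support)

lemma cyc2 {W : Type*} [Fintype W] [DecidableEq W] (hcard : Fintype.card W = 3)
    {H : SimpleGraph W} (h : ¬ H.IsAcyclic) :
    ∀ x y : W, x ≠ y → H.Adj x y := by
  unfold SimpleGraph.IsAcyclic at h
  push_neg at h
  obtain ⟨v, c, hc⟩ := h
  cases c with
  | nil => exact absurd hc (by simp)
  | cons h₁ q =>
    cases q with
    | nil => exact absurd hc.three_le_length (by simp)
    | cons h₂ q2 =>
      cases q2 with
      | nil => exact absurd hc.three_le_length (by simp)
      | cons h₃ q3 =>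
        rename_i s1 s2 s3
        have hle : (SimpleGraph.Walk.cons h₁ (SimpleGraph.Walk.cons h₂
            (SimpleGraph.Walk.cons h₃ q3))).length ≤ 3 := by
          have h1 := hc.support_nodup.length_le_card
          rw [hcard] at h1
          have h4 : (SimpleGraph.Walk.cons h₁ (SimpleGraph.Walk.cons h₂
              (SimpleGraph.Walk.cons h₃ q3))).support.tail.length
              = (SimpleGraph.Walk.cons h₁ (SimpleGraph.Walk.cons h₂
              (SimpleGraph.Walk.cons h₃ q3))).length := by
            rw [List.length_tail, SimpleGraph.Walk.length_support]; rfl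
          omega
        have hq3 : q3.length = 0 := by
          simp only [SimpleGraph.Walk.length_cons] at hle; omega
        have hs3v : s3 = v := SimpleGraph.Walk.eq_of_length_eq_zero hq3
        subst hs3v
        have hvs1 : s3 ≠ s1 := h₁.ne
        have hs12 : s1 ≠ s2 := h₂.ne
        have hs2v : s2 ≠ s3 := h₃.ne
        have huniv : (Finset.univ : Finset W) = {s3, s1, s2} := by
          apply (Finset.eq_of_subset_of_card_le (Finset.subset_univ _) ?_).symm
          rw [Finset.card_univ, hcard]
          have : ({s3, s1, s2} : Finset W).card = 3 := by
            rw [Finset.card_insert_of_notMem (by simp [hvs1, hs2v.symm]),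
              Finset.card_insert_of_notMem (by simp [hs12]), Finset.card_singleton]
          omega
        intro x y hxy
        have hx : x ∈ ({s3, s1, s2} : Finset W) := huniv ▸ Finset.mem_univ x
        have hy : y ∈ ({s3, s1, s2} : Finset W) := huniv ▸ Finset.mem_univ y
        simp only [Finset.mem_insert, Finset.mem_singleton] at hx hy
        rcases hx with rfl | rfl | rfl <;> rcases hy with rfl | rfl | rfl <;>
          first
            | exact absurd rfl hxy
            | exact h₁ | exact h₁.symm | exact h₂ | exact h₂.symm
            | exact h₃ | exact h₃.symm
variable {V : Type*} [Fintype V] [DecidableEq V] (G : SimpleGraph V) [DecidableRel G.Adj]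

lemma three_distinct_card {W : Type*} [Fintype W] [DecidableEq W] {a b c : W}
    (hab : a ≠ b) (hac : a ≠ c) (hbc : b ≠ c) : 3 ≤ Fintype.card W := by
  have h : ({a, b, c} : Finset W).card = 3 := by
    rw [Finset.card_insert_of_notMem (by simp [hab, hac]),
      Finset.card_insert_of_notMem (by simp [hbc]), Finset.card_singleton]
  rw [← Finset.card_univ, ← h]
  exact Finset.card_le_univ _

lemma deg_ge3 (hlnf : LocallyNonforesty G) (v : V) : 3 ≤ G.degree v := by
  obtain ⟨a, b, c, hac, hab, hbc⟩ := cyc1 (hlnf v)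
  have h3 : 3 ≤ Fintype.card (G.neighborSet v) :=
    three_distinct_card hab.ne hac hbc.ne
  rwa [G.card_neighborSet_eq_degree] at h3

lemma tri (hlnf : LocallyNonforesty G) {v : V} (hdeg : G.degree v = 3)
    {x y : V} (hx : G.Adj v x) (hy : G.Adj v y) (hxy : x ≠ y) : G.Adj x y := by
  have hcard : Fintype.card (G.neighborSet v) = 3 := by
    rw [G.card_neighborSet_eq_degree]; exact hdeg
  have := cyc2 hcard (hlnf v) ⟨x, hx⟩ ⟨y, hy⟩ (by simpa [Subtype.ext_iff] using hxy)
  simpa using this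
lemma cross (X Y : Finset V) :
    ∑ v ∈ X, (G.neighborFinset v ∩ Y).card = ∑ u ∈ Y, (G.neighborFinset u ∩ X).card := by
  have h : ∀ (A B : Finset V) (v : V), (G.neighborFinset v ∩ B).card
      = ∑ u ∈ B, if G.Adj v u then 1 else 0 := by
    intro A B v
    rw [← Finset.card_filter]
    congr 1
    ext u
    simp [SimpleGraph.mem_neighborFinset, Finset.mem_inter, Finset.mem_filter, and_comm]
  simp only [h X Y, h Y X]
  rw [Finset.sum_comm]
  congr 1; ext v; congr 1; ext u
  simp [SimpleGraph.adj_comm]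

lemma sum_rigid {α : Type*} (s : Finset α) (f : α → ℕ) (m : ℕ)
    (h : ∀ x ∈ s, m ≤ f x) (hs : ∑ x ∈ s, f x = m * s.card) : ∀ x ∈ s, f x = m := by
  intro x hx
  by_contra hne
  have hlt : m < f x := lt_of_le_of_ne (h x hx) (Ne.symm hne)
  have : ∑ y ∈ s, m < ∑ y ∈ s, f y := Finset.sum_lt_sum h ⟨x, hx, hlt⟩
  rw [Finset.sum_const, smul_eq_mul, mul_comm] at this
  omega

lemma exists_big {α : Type*} (s : Finset α) (f : α → ℕ) (m : ℕ)
    (hs : m * s.card < ∑ x ∈ s, f x) : ∃ x ∈ s, m + 1 ≤ f x := by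
  by_contra hne
  push_neg at hne
  have : ∑ x ∈ s, f x ≤ ∑ _x ∈ s, m := Finset.sum_le_sum (fun x hx => by have := hne x hx; omega)
  rw [Finset.sum_const, smul_eq_mul, mul_comm] at this
  omega

lemma card3_mem {s : Finset V} (h3 : s.card = 3) {u : V} (hu : u ∈ s) :
    ∃ b c, b ≠ c ∧ u ≠ b ∧ u ≠ c ∧ s = {u, b, c} := by
  obtain ⟨x, y, z, hxy, hxz, hyz, rfl⟩ := Finset.card_eq_three.mp h3
  simp only [Finset.mem_insert, Finset.mem_singleton] at hu
  rcases hu with rfl | rfl | rfl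
  · exact ⟨y, z, hyz, hxy, hxz, rfl⟩
  · refine ⟨x, z, hxz, hxy.symm, hyz, ?_⟩
    ext w; simp only [Finset.mem_insert, Finset.mem_singleton]; tauto
  · refine ⟨x, y, hxy, hxz.symm, hyz.symm, ?_⟩
    ext w; simp only [Finset.mem_insert, Finset.mem_singleton]; tauto
section Main

variable {k : ℕ} (G : SimpleGraph (Fin (8*k+3))) [DecidableRel G.Adj]

def TT : Finset (Fin (8*k+3)) := Finset.univ.filter (fun v => G.degree v = 3)
def dTf (u : Fin (8*k+3)) : ℕ := (G.neighborFinset u ∩ TT G).card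
def bbf (u : Fin (8*k+3)) : ℕ := (G.neighborFinset u \ TT G).card
def AA : Finset (Fin (8*k+3)) :=
  Finset.univ.filter (fun u => ¬ G.degree u = 3 ∧ dTf G u ≠ 0)
def RR : Finset (Fin (8*k+3)) :=
  Finset.univ.filter (fun u => ¬ G.degree u = 3 ∧ dTf G u = 0)

lemma mem_TT {v : Fin (8*k+3)} : v ∈ TT G ↔ G.degree v = 3 := by simp [TT]

lemma deg_card (v : Fin (8*k+3)) : (G.neighborFinset v).card = G.degree v := rfl

lemma exists_outside (s : Finset (Fin (8*k+3))) (hs : s.card < 8*k+3) :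
    ∃ w, w ∉ s := by
  by_contra h
  push_neg at h
  have h2 : (Finset.univ : Finset (Fin (8*k+3))) ⊆ s := fun x _ => h x
  have h3 := Finset.card_le_card h2
  rw [Finset.card_univ, Fintype.card_fin] at h3
  omega

lemma surgery (h3c : ThreeConnected G) (S : Finset (Fin (8*k+3))) (hS : S.card ≤ 2)
    (C : Set (Fin (8*k+3))) (hCS : ∀ c ∈ C, c ∉ S)
    (hcl : ∀ a b, G.Adj a b → a ∈ C → b ∉ S → b ∈ C)
    (u : Fin (8*k+3)) (hu : u ∈ C) (w : Fin (8*k+3)) (hw : w ∉ C) (hwS : w ∉ S) : False :=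
  disconn G S C hCS hcl u hu w hw hwS (h3c.2 S hS)

lemma nbr_eq {v : Fin (8*k+3)} (hv : G.degree v = 3) {u : Fin (8*k+3)} (hu : G.Adj v u) :
    ∃ b c, b ≠ c ∧ u ≠ b ∧ u ≠ c ∧ G.neighborFinset v = {u, b, c}
      ∧ G.Adj v b ∧ G.Adj v c := by
  have hNv : (G.neighborFinset v).card = 3 := by rw [deg_card]; exact hv
  obtain ⟨b, c, hbc, hub, huc, heq⟩ :=
    card3_mem hNv ((G.mem_neighborFinset v u).2 hu)
  refine ⟨b, c, hbc, hub, huc, heq, ?_, ?_⟩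
  · exact (G.mem_neighborFinset v b).1 (by rw [heq]; simp)
  · exact (G.mem_neighborFinset v c).1 (by rw [heq]; simp)

lemma Tindep (hk : 1 ≤ k) (h3c : ThreeConnected G) (hlnf : LocallyNonforesty G)
    {v w : Fin (8*k+3)} (hv : G.degree v = 3) (hw : G.degree w = 3) : ¬ G.Adj v w := by
  intro hadj
  obtain ⟨b, c, hbc, hwb, hwc, hNveq, hvb, hvc⟩ := nbr_eq G hv hadj
  have hwb' : G.Adj w b := tri G hlnf hv hadj hvb hwb
  have hwc' : G.Adj w c := tri G hlnf hv hadj hvc hwc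
  have hsub : ({v, b, c} : Finset (Fin (8*k+3))) ⊆ G.neighborFinset w := by
    intro z hz
    simp only [Finset.mem_insert, Finset.mem_singleton] at hz
    rcases hz with rfl | rfl | rfl
    · exact (G.mem_neighborFinset w z).2 hadj.symm
    · exact (G.mem_neighborFinset w z).2 hwb'
    · exact (G.mem_neighborFinset w z).2 hwc'
  have hNweq : G.neighborFinset w = {v, b, c} := by
    apply (Finset.eq_of_subset_of_card_le hsub ?_).symm
    rw [deg_card, hw]
    have h1 : ({v, b, c} : Finset (Fin (8*k+3))).card = 3 := by
      rw [Finset.card_insert_of_notMem (by simp [hvb.ne, hvc.ne]),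
        Finset.card_insert_of_notMem (by simp [hbc]), Finset.card_singleton]
    omega
  obtain ⟨z, hz⟩ := exists_outside ({v, w, b, c} : Finset (Fin (8*k+3))) (by
    have i1 := Finset.card_insert_le v ({w, b, c} : Finset (Fin (8*k+3)))
    have i2 := Finset.card_insert_le w ({b, c} : Finset (Fin (8*k+3)))
    have i3 := Finset.card_insert_le b ({c} : Finset (Fin (8*k+3)))
    simp only [Finset.card_singleton] at i1 i2 i3
    omega)
  simp only [Finset.mem_insert, Finset.mem_singleton, not_or] at hz
  obtain ⟨hzv, hzw, hzb, hzc⟩ := hz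
  refine surgery G h3c {b, c} ?_ {v, w} ?_ ?_ v (by simp) z ?_ ?_
  · have i := Finset.card_insert_le b ({c} : Finset (Fin (8*k+3)))
    simp only [Finset.card_singleton] at i; omega
  · intro x hx
    simp only [Set.mem_insert_iff, Set.mem_singleton_iff] at hx
    rcases hx with rfl | rfl
    · simp only [Finset.mem_insert, Finset.mem_singleton]
      push_neg
      exact ⟨hvb.ne, hvc.ne⟩
    · simp only [Finset.mem_insert, Finset.mem_singleton]
      push_neg
      exact ⟨hwb, hwc⟩
  · intro a b' hab haC hbS
    simp only [Set.mem_insert_iff, Set.mem_singleton_iff] at haC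
    show b' ∈ ({v, w} : Set (Fin (8*k+3)))
    simp only [Set.mem_insert_iff, Set.mem_singleton_iff]
    rcases haC with rfl | rfl
    · have : b' ∈ G.neighborFinset a := (G.mem_neighborFinset a b').2 hab
      rw [hNveq] at this
      simp only [Finset.mem_insert, Finset.mem_singleton] at this hbS
      rcases this with rfl | rfl | rfl
      · right; rfl
      · exact absurd (Or.inl rfl) hbS
      · exact absurd (Or.inr rfl) hbS
    · have : b' ∈ G.neighborFinset a := (G.mem_neighborFinset a b').2 hab
      rw [hNweq] at this
      simp only [Finset.mem_insert, Finset.mem_singleton] at this hbS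
      rcases this with rfl | rfl | rfl
      · left; rfl
      · exact absurd (Or.inl rfl) hbS
      · exact absurd (Or.inr rfl) hbS
  · intro hzC
    simp only [Set.mem_insert_iff, Set.mem_singleton_iff] at hzC
    rcases hzC with rfl | rfl
    · exact hzv rfl
    · exact hzw rfl
  · simp only [Finset.mem_insert, Finset.mem_singleton]
    push_neg
    exact ⟨hzb, hzc⟩

lemma sumdeg (he : G.edgeSet.ncard = 15*k+6) :
    ∑ v, G.degree v = 30*k+12 := by
  rw [SimpleGraph.sum_degrees_eq_twice_card_edges]
  have h : G.edgeFinset.card = 15*k+6 := by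
    rw [← he, Set.ncard_eq_toFinset_card']
    unfold SimpleGraph.edgeFinset
    congr
  rw [h]; ring

end Main
section Main2

variable {k : ℕ} (G : SimpleGraph (Fin (8*k+3))) [DecidableRel G.Adj]

def NN : Finset (Fin (8*k+3)) := Finset.univ.filter (fun u => ¬ G.degree u = 3)

lemma mem_AA {u : Fin (8*k+3)} : u ∈ AA G ↔ (¬ G.degree u = 3 ∧ dTf G u ≠ 0) := by simp [AA]
lemma mem_RR {u : Fin (8*k+3)} : u ∈ RR G ↔ (¬ G.degree u = 3 ∧ dTf G u = 0) := by simp [RR]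
lemma mem_NN {u : Fin (8*k+3)} : u ∈ NN G ↔ ¬ G.degree u = 3 := by simp [NN]

lemma dTf_le_deg (u : Fin (8*k+3)) : dTf G u ≤ G.degree u := by
  rw [← deg_card]
  exact Finset.card_le_card Finset.inter_subset_left

lemma deg_split (u : Fin (8*k+3)) : dTf G u + bbf G u = G.degree u := by
  rw [← deg_card]
  exact Finset.card_inter_add_card_sdiff _ _

lemma nbr_not_T (hk : 1 ≤ k) (h3c : ThreeConnected G) (hlnf : LocallyNonforesty G)
    {v u : Fin (8*k+3)} (hv : G.degree v = 3) (hadj : G.Adj v u) : ¬ G.degree u = 3 :=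
  fun hu => Tindep G hk h3c hlnf hv hu hadj

lemma sum_dTf_NN (hk : 1 ≤ k) (h3c : ThreeConnected G) (hlnf : LocallyNonforesty G) :
    ∑ u ∈ NN G, dTf G u = 3 * (TT G).card := by
  have h1 : ∑ u ∈ NN G, dTf G u = ∑ v ∈ TT G, (G.neighborFinset v ∩ NN G).card :=
    cross G (NN G) (TT G)
  rw [h1]
  have h2 : ∀ v ∈ TT G, (G.neighborFinset v ∩ NN G).card = 3 := by
    intro v hv
    rw [mem_TT] at hv
    have : G.neighborFinset v ∩ NN G = G.neighborFinset v := by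
      apply Finset.inter_eq_left.2
      intro u hu
      rw [mem_NN]
      exact nbr_not_T G hk h3c hlnf hv ((G.mem_neighborFinset v u).1 hu)
    rw [this, deg_card, hv]
  rw [Finset.sum_congr rfl h2, Finset.sum_const, smul_eq_mul, mul_comm]

lemma sum_dTf_AA (hk : 1 ≤ k) (h3c : ThreeConnected G) (hlnf : LocallyNonforesty G) :
    ∑ u ∈ AA G, dTf G u = 3 * (TT G).card := by
  have hsplit : ∑ u ∈ NN G, dTf G u
      = ∑ u ∈ AA G, dTf G u + ∑ u ∈ RR G, dTf G u := by
    have hA : AA G = (NN G).filter (fun u => ¬ dTf G u = 0) := by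
      rw [NN, Finset.filter_filter]
      rfl
    have hR : RR G = (NN G).filter (fun u => dTf G u = 0) := by
      rw [NN, Finset.filter_filter]
      rfl
    rw [hA, hR]
    have := Finset.sum_filter_add_sum_filter_not (NN G) (fun u => dTf G u = 0) (dTf G)
    omega
  have hzero : ∑ u ∈ RR G, dTf G u = 0 := by
    apply Finset.sum_eq_zero
    intro u hu
    exact ((mem_RR G).1 hu).2
  have := sum_dTf_NN G hk h3c hlnf
  omega

lemma t_bound (hk : 1 ≤ k) (h3c : ThreeConnected G) (hlnf : LocallyNonforesty G)
    (he : G.edgeSet.ncard = 15*k+6) : 3 * (TT G).card ≤ 15*k+6 := by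
  have h1 : ∑ v ∈ TT G, G.degree v = 3 * (TT G).card := by
    rw [Finset.sum_congr rfl (fun v hv => (mem_TT G).1 hv), Finset.sum_const,
      smul_eq_mul, mul_comm]
  have h2 : ∑ u ∈ NN G, dTf G u ≤ ∑ u ∈ NN G, G.degree u :=
    Finset.sum_le_sum (fun u _ => dTf_le_deg G u)
  have h3 := sum_dTf_NN G hk h3c hlnf
  have h4 : ∑ v ∈ TT G, G.degree v + ∑ u ∈ NN G, G.degree u = ∑ v, G.degree v := by
    rw [TT, NN]
    exact Finset.sum_filter_add_sum_filter_not _ _ _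
  have h5 := sumdeg G he
  omega

end Main2
section Main3

variable {k : ℕ} (G : SimpleGraph (Fin (8*k+3))) [DecidableRel G.Adj]

lemma bbf_ge3 (hk : 1 ≤ k) (h3c : ThreeConnected G) (hlnf : LocallyNonforesty G)
    (he : G.edgeSet.ncard = 15*k+6) {u : Fin (8*k+3)} (hu : u ∈ AA G) : 3 ≤ bbf G u := by
  rw [mem_AA] at hu
  obtain ⟨hdu, hdT⟩ := hu
  obtain ⟨v, hv⟩ := Finset.card_pos.1 (Nat.pos_of_ne_zero hdT)
  rw [Finset.mem_inter, G.mem_neighborFinset, mem_TT] at hv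
  obtain ⟨huv, hv3⟩ := hv
  obtain ⟨b, c, hbc, hub, huc, hNveq, hvb, hvc⟩ := nbr_eq G hv3 huv.symm
  have hub' : G.Adj u b := tri G hlnf hv3 huv.symm hvb hub
  have huc' : G.Adj u c := tri G hlnf hv3 huv.symm hvc huc
  have hbT : ¬ G.degree b = 3 := nbr_not_T G hk h3c hlnf hv3 hvb
  have hcT : ¬ G.degree c = 3 := nbr_not_T G hk h3c hlnf hv3 hvc
  have hbmem : b ∈ G.neighborFinset u \ TT G := by
    rw [Finset.mem_sdiff, G.mem_neighborFinset, mem_TT]; exact ⟨hub', hbT⟩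
  have hcmem : c ∈ G.neighborFinset u \ TT G := by
    rw [Finset.mem_sdiff, G.mem_neighborFinset, mem_TT]; exact ⟨huc', hcT⟩
  by_contra hlt
  push_neg at hlt
  -- then N u \ TT = {b, c}
  have hsub : ({b, c} : Finset (Fin (8*k+3))) ⊆ G.neighborFinset u \ TT G := by
    intro z hz
    simp only [Finset.mem_insert, Finset.mem_singleton] at hz
    rcases hz with rfl | rfl
    · exact hbmem
    · exact hcmem
  have hcard2 : ({b, c} : Finset (Fin (8*k+3))).card = 2 := by
    rw [Finset.card_insert_of_notMem (by simp [hbc]), Finset.card_singleton]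
  have heqbc : G.neighborFinset u \ TT G = {b, c} := by
    refine (Finset.eq_of_subset_of_card_le hsub ?_).symm
    rw [hcard2]
    exact Nat.le_of_lt_succ hlt
  -- witness outside
  have htb := t_bound G hk h3c hlnf he
  obtain ⟨z, hz⟩ := exists_outside (insert u ((TT G) ∪ {b, c})) (by
    have i1 := Finset.card_insert_le u ((TT G) ∪ ({b, c} : Finset (Fin (8*k+3))))
    have i2 := Finset.card_union_le (TT G) ({b, c} : Finset (Fin (8*k+3)))
    omega)
  simp only [Finset.mem_insert, Finset.mem_union, Finset.mem_singleton, not_or] at hz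
  obtain ⟨hzu, hzT, hzb, hzc⟩ := hz
  -- surgery with S = {b,c}, C = {u} ∪ (N u ∩ T)
  refine surgery G h3c {b, c} ?_
    (fun z => z = u ∨ (z ∈ G.neighborFinset u ∧ G.degree z = 3)) ?_ ?_
    u (Or.inl rfl) z ?_ ?_
  · have i := Finset.card_insert_le b ({c} : Finset (Fin (8*k+3)))
    simp only [Finset.card_singleton] at i; omega
  · rintro x (rfl | ⟨hxn, hx3⟩) <;> simp only [Finset.mem_insert, Finset.mem_singleton, not_or]
    · exact ⟨hub, huc⟩
    · constructor
      · rintro rfl; exact hbT hx3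
      · rintro rfl; exact hcT hx3
  · rintro a b' hab (rfl | ⟨han, ha3⟩) hbS
    · -- a = u
      by_cases hb3 : G.degree b' = 3
      · exact Or.inr ⟨(G.mem_neighborFinset a b').2 hab, hb3⟩
      · exfalso
        apply hbS
        have : b' ∈ G.neighborFinset a \ TT G := by
          rw [Finset.mem_sdiff, G.mem_neighborFinset, mem_TT]
          exact ⟨hab, hb3⟩
        rw [heqbc] at this
        exact this
    · -- a ∈ N u with degree 3
      have hau : G.Adj a u := ((G.mem_neighborFinset u a).1 han).symm
      obtain ⟨b₂, c₂, hb₂c₂, hub₂, huc₂, hNaeq, hab₂, hac₂⟩ := nbr_eq G ha3 hau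
      have hb'mem : b' ∈ G.neighborFinset a := (G.mem_neighborFinset a b').2 hab
      rw [hNaeq] at hb'mem
      simp only [Finset.mem_insert, Finset.mem_singleton] at hb'mem
      have hkey : ∀ w, w ≠ u → w ∈ G.neighborFinset a → w ∈ ({b, c} : Finset (Fin (8*k+3))) := by
        intro w hwu hwn
        have hadj_aw : G.Adj a w := (G.mem_neighborFinset a w).1 hwn
        have huw : G.Adj u w := tri G hlnf ha3 hau hadj_aw (fun h => hwu h.symm)
        have hwT : ¬ G.degree w = 3 := nbr_not_T G hk h3c hlnf ha3 hadj_aw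
        have : w ∈ G.neighborFinset u \ TT G := by
          rw [Finset.mem_sdiff, G.mem_neighborFinset, mem_TT]
          exact ⟨huw, hwT⟩
        rwa [heqbc] at this
      rcases hb'mem with rfl | rfl | rfl
      · exact Or.inl rfl
      · by_cases hbu : b' = u
        · exact Or.inl hbu
        · exact absurd (hkey b' hbu (by rw [hNaeq]; simp)) hbS
      · by_cases hbu : b' = u
        · exact Or.inl hbu
        · exact absurd (hkey b' hbu (by rw [hNaeq]; simp)) hbS
  · rintro (rfl | ⟨hzn, hz3⟩)
    · exact hzu rfl
    · exact hzT ((mem_TT G).2 hz3)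
  · simp only [Finset.mem_insert, Finset.mem_singleton, not_or]
    exact ⟨hzb, hzc⟩

lemma counts (hk : 1 ≤ k) (h3c : ThreeConnected G) (hlnf : LocallyNonforesty G)
    (he : G.edgeSet.ncard = 15*k+6) :
    (TT G).card + (AA G).card + (RR G).card = 8*k+3 ∧
    ∑ u ∈ AA G, dTf G u = 3 * (TT G).card ∧
    (AA G).card ≤ 3 * (TT G).card ∧
    3 * (AA G).card ≤ ∑ u ∈ AA G, bbf G u ∧
    4 * (RR G).card ≤ ∑ u ∈ RR G, G.degree u ∧
    6 * (TT G).card + (∑ u ∈ AA G, bbf G u) + (∑ u ∈ RR G, G.degree u) = 30*k+12 := by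
  have hA : AA G = (NN G).filter (fun u => ¬ dTf G u = 0) := by
    rw [NN, Finset.filter_filter]; rfl
  have hR : RR G = (NN G).filter (fun u => dTf G u = 0) := by
    rw [NN, Finset.filter_filter]; rfl
  have hpart : (TT G).card + (AA G).card + (RR G).card = 8*k+3 := by
    have h1 := Finset.card_filter_add_card_filter_not
      (s := (Finset.univ : Finset (Fin (8*k+3)))) (p := fun v => G.degree v = 3)
    have h2 := Finset.card_filter_add_card_filter_not
      (s := NN G) (p := fun u => dTf G u = 0)
    rw [Finset.card_univ, Fintype.card_fin] at h1
    have hTT : TT G = Finset.univ.filter (fun v => G.degree v = 3) := rfl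
    have hNN : NN G = Finset.univ.filter (fun v => ¬ G.degree v = 3) := rfl
    rw [← hTT, ← hNN] at h1
    rw [← hR] at h2
    have : (NN G).filter (fun u => ¬ dTf G u = 0) = AA G := hA.symm
    rw [this] at h2
    omega
  have hdTA := sum_dTf_AA G hk h3c hlnf
  have haleq : (AA G).card ≤ 3 * (TT G).card := by
    rw [← hdTA]
    have : ∀ u ∈ AA G, 1 ≤ dTf G u := by
      intro u hu
      have := ((mem_AA G).1 hu).2
      omega
    calc (AA G).card = ∑ _u ∈ AA G, 1 := by rw [Finset.sum_const, smul_eq_mul, mul_one]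
    _ ≤ ∑ u ∈ AA G, dTf G u := Finset.sum_le_sum this
  have hB : 3 * (AA G).card ≤ ∑ u ∈ AA G, bbf G u := by
    calc 3 * (AA G).card = ∑ _u ∈ AA G, 3 := by rw [Finset.sum_const, smul_eq_mul, mul_comm]
    _ ≤ ∑ u ∈ AA G, bbf G u := Finset.sum_le_sum (fun u hu => bbf_ge3 G hk h3c hlnf he hu)
  have hD : 4 * (RR G).card ≤ ∑ u ∈ RR G, G.degree u := by
    calc 4 * (RR G).card = ∑ _u ∈ RR G, 4 := by rw [Finset.sum_const, smul_eq_mul, mul_comm]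
    _ ≤ ∑ u ∈ RR G, G.degree u := Finset.sum_le_sum (fun u hu => by
        have h1 := deg_ge3 G hlnf u
        have h2 := ((mem_RR G).1 hu).1
        omega)
  have hmain : 6 * (TT G).card + (∑ u ∈ AA G, bbf G u) + (∑ u ∈ RR G, G.degree u)
      = 30*k+12 := by
    have h1 : ∑ v ∈ TT G, G.degree v + ∑ u ∈ NN G, G.degree u = ∑ v, G.degree v := by
      rw [TT, NN]
      exact Finset.sum_filter_add_sum_filter_not _ _ _
    have h2 : ∑ v ∈ TT G, G.degree v = 3 * (TT G).card := by
      rw [Finset.sum_congr rfl (fun v hv => (mem_TT G).1 hv), Finset.sum_const,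
        smul_eq_mul, mul_comm]
    have h3 : ∑ u ∈ NN G, G.degree u
        = ∑ u ∈ AA G, G.degree u + ∑ u ∈ RR G, G.degree u := by
      rw [hA, hR]
      have := Finset.sum_filter_add_sum_filter_not (NN G) (fun u => dTf G u = 0) (fun u => G.degree u)
      omega
    have h4 : ∑ u ∈ AA G, G.degree u = ∑ u ∈ AA G, (dTf G u + bbf G u) :=
      Finset.sum_congr rfl (fun u _ => (deg_split G u).symm)
    rw [Finset.sum_add_distrib] at h4
    have h5 := sumdeg G he
    omega
  exact ⟨hpart, hdTA, haleq, hB, hD, hmain⟩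

end Main3
section Main4

variable {k : ℕ} (G : SimpleGraph (Fin (8*k+3))) [DecidableRel G.Adj]

lemma caseA (hk : 1 ≤ k) (h3c : ThreeConnected G) (hlnf : LocallyNonforesty G)
    (he : G.edgeSet.ncard = 15*k+6) (ht : (TT G).card = 2*k+1) : False := by
  obtain ⟨hpart, hdTA, haleq, hB, hD, hmain⟩ := counts G hk h3c hlnf he
  have ha : (AA G).card = 6*k+2 := by omega
  -- get u* with dTf ≥ 2
  obtain ⟨u, hu, hu2⟩ := exists_big (AA G) (dTf G) 1 (by omega)
  have hbbf3 : bbf G u = 3 := by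
    refine sum_rigid (AA G) (bbf G) 3 (fun x hx => bbf_ge3 G hk h3c hlnf he hx) ?_ u hu
    omega
  -- two distinct T-neighbors
  have hrfl : dTf G u = (G.neighborFinset u ∩ TT G).card := rfl
  obtain ⟨v1, hv1, v2, hv2, hv12⟩ := Finset.one_lt_card.1 (by omega :
    1 < (G.neighborFinset u ∩ TT G).card)
  rw [Finset.mem_inter, G.mem_neighborFinset, mem_TT] at hv1 hv2
  obtain ⟨huv1, hv13⟩ := hv1
  obtain ⟨huv2, hv23⟩ := hv2
  obtain ⟨b1, c1, hb1c1, hub1, huc1, hN1, hv1b, hv1c⟩ := nbr_eq G hv13 huv1.symm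
  obtain ⟨b2, c2, hb2c2, hub2, huc2, hN2, hv2b, hv2c⟩ := nbr_eq G hv23 huv2.symm
  have hmemZ : ∀ (vv bz : Fin (8*k+3)), G.degree vv = 3 → G.Adj vv u → G.Adj vv bz →
      u ≠ bz → bz ∈ G.neighborFinset u \ TT G := by
    intro vv bz hvv3 hvu hvb hne
    rw [Finset.mem_sdiff, G.mem_neighborFinset, mem_TT]
    exact ⟨tri G hlnf hvv3 hvu hvb hne, nbr_not_T G hk h3c hlnf hvv3 hvb⟩
  have hb1Z := hmemZ v1 b1 hv13 huv1.symm hv1b hub1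
  have hc1Z := hmemZ v1 c1 hv13 huv1.symm hv1c huc1
  have hb2Z := hmemZ v2 b2 hv23 huv2.symm hv2b hub2
  have hc2Z := hmemZ v2 c2 hv23 huv2.symm hv2c huc2
  -- {b1,c1} and {b2,c2} are 2-subsets of a 3-set, hence intersect
  have hZcard : (G.neighborFinset u \ TT G).card = 3 := hbbf3
  by_cases hdisj : Disjoint ({b1, c1} : Finset (Fin (8*k+3))) ({b2, c2} : Finset (Fin (8*k+3)))
  · have hsub : ({b1, c1} ∪ {b2, c2} : Finset (Fin (8*k+3))) ⊆ G.neighborFinset u \ TT G := by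
      intro z hz
      simp only [Finset.mem_union, Finset.mem_insert, Finset.mem_singleton] at hz
      rcases hz with (rfl | rfl) | (rfl | rfl)
      · exact hb1Z
      · exact hc1Z
      · exact hb2Z
      · exact hc2Z
    have hcu : ({b1, c1} ∪ {b2, c2} : Finset (Fin (8*k+3))).card = 4 := by
      rw [Finset.card_union_of_disjoint hdisj,
        Finset.card_insert_of_notMem (by simp [hb1c1]),
        Finset.card_insert_of_notMem (by simp [hb2c2])]
      simp
    have := Finset.card_le_card hsub
    omega
  · obtain ⟨w, hw1, hw2⟩ := Finset.not_disjoint_iff.1 hdisj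
    simp only [Finset.mem_insert, Finset.mem_singleton] at hw1 hw2
    have hwu : w ≠ u := by
      rcases hw1 with rfl | rfl
      · exact fun h => hub1 h.symm
      · exact fun h => huc1 h.symm
    have hv1w : G.Adj v1 w := by rcases hw1 with rfl | rfl; exacts [hv1b, hv1c]
    have hv2w : G.Adj v2 w := by rcases hw2 with rfl | rfl; exacts [hv2b, hv2c]
    have hwdeg : ¬ G.degree w = 3 := nbr_not_T G hk h3c hlnf hv13 hv1w
    have hwdT : 2 ≤ dTf G w := by
      have hsub : ({v1, v2} : Finset (Fin (8*k+3))) ⊆ G.neighborFinset w ∩ TT G := by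
        intro z hz
        simp only [Finset.mem_insert, Finset.mem_singleton] at hz
        rw [Finset.mem_inter, G.mem_neighborFinset, mem_TT]
        rcases hz with rfl | rfl
        · exact ⟨hv1w.symm, hv13⟩
        · exact ⟨hv2w.symm, hv23⟩
      have h2 : ({v1, v2} : Finset (Fin (8*k+3))).card = 2 := by
        rw [Finset.card_insert_of_notMem (by simp [hv12]), Finset.card_singleton]
      have := Finset.card_le_card hsub
      rw [h2] at this
      exact this
    have hwA : w ∈ AA G := by
      rw [mem_AA]
      exact ⟨hwdeg, by omega⟩
    -- sum too large
    have hwe : w ∈ (AA G).erase u := Finset.mem_erase.2 ⟨hwu, hwA⟩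
    have e1 : dTf G u + ∑ y ∈ (AA G).erase u, dTf G y = ∑ y ∈ AA G, dTf G y :=
      Finset.add_sum_erase _ _ hu
    have e2 : dTf G w + ∑ y ∈ ((AA G).erase u).erase w, dTf G y
        = ∑ y ∈ (AA G).erase u, dTf G y :=
      Finset.add_sum_erase _ _ hwe
    have e3 : (((AA G).erase u).erase w).card ≤ ∑ y ∈ ((AA G).erase u).erase w, dTf G y := by
      have h1 : ∀ y ∈ ((AA G).erase u).erase w, 1 ≤ dTf G y := by
        intro y hy
        have := ((mem_AA G).1 (Finset.mem_of_mem_erase (Finset.mem_of_mem_erase hy))).2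
        omega
      calc (((AA G).erase u).erase w).card = ∑ _y ∈ ((AA G).erase u).erase w, 1 := by
            rw [Finset.sum_const, smul_eq_mul, mul_one]
      _ ≤ _ := Finset.sum_le_sum h1
    have e4 : (((AA G).erase u).erase w).card = (AA G).card - 2 := by
      rw [Finset.card_erase_of_mem hwe, Finset.card_erase_of_mem hu]
      omega
    omega

end Main4
section Main5

variable {k : ℕ} (G : SimpleGraph (Fin (8*k+3))) [DecidableRel G.Adj]

lemma caseB (hk : 1 ≤ k) (h3c : ThreeConnected G) (hlnf : LocallyNonforesty G)
    (he : G.edgeSet.ncard = 15*k+6) (ht : (TT G).card = 2*k) : False := by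
  obtain ⟨hpart, hdTA, haleq, hB, hD, hmain⟩ := counts G hk h3c hlnf he
  have hr : (RR G).card = 3 := by omega
  have ha : (AA G).card = 6*k := by omega
  have hbbf3 : ∀ u ∈ AA G, bbf G u = 3 :=
    sum_rigid (AA G) (bbf G) 3 (fun z hz => bbf_ge3 G hk h3c hlnf he hz) (by omega)
  have hdT1 : ∀ u ∈ AA G, dTf G u = 1 :=
    sum_rigid (AA G) (dTf G) 1 (fun z hz => by
      have := ((mem_AA G).1 hz).2; omega) (by omega)
  have hdeg4 : ∀ u ∈ RR G, G.degree u = 4 :=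
    sum_rigid (RR G) (fun z => G.degree z) 4 (fun z hz => by
      have h1 := deg_ge3 G hlnf z
      have h2 := ((mem_RR G).1 hz).1
      show 4 ≤ G.degree z
      omega) (by
        show (∑ z ∈ RR G, G.degree z) = 4 * (RR G).card
        omega)
  -- structure of an AA vertex
  have strA : ∀ u, u ∈ AA G → ∃ v β γ, G.degree v = 3 ∧
      (G.neighborFinset u ∩ TT G) = {v} ∧ G.neighborFinset v = {u, β, γ} ∧
      β ≠ γ ∧ u ≠ β ∧ u ≠ γ ∧ G.Adj u β ∧ G.Adj u γ ∧ β ∈ AA G ∧ γ ∈ AA G ∧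
      G.Adj v u ∧ G.Adj v β ∧ G.Adj v γ := by
    intro u hu
    obtain ⟨v, hveq⟩ := Finset.card_eq_one.1 (hdT1 u hu)
    have hvmem : v ∈ G.neighborFinset u ∩ TT G := by rw [hveq]; simp
    rw [Finset.mem_inter, G.mem_neighborFinset, mem_TT] at hvmem
    obtain ⟨huv, hv3⟩ := hvmem
    obtain ⟨β, γ, hbg, hub, hug, hNv, hvb, hvg⟩ := nbr_eq G hv3 huv.symm
    have hmemA : ∀ z, G.Adj v z → z ∈ AA G := by
      intro z hz
      rw [mem_AA]
      refine ⟨nbr_not_T G hk h3c hlnf hv3 hz, ?_⟩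
      have hm : v ∈ G.neighborFinset z ∩ TT G := by
        rw [Finset.mem_inter, G.mem_neighborFinset, mem_TT]; exact ⟨hz.symm, hv3⟩
      exact Finset.card_ne_zero_of_mem hm
    exact ⟨v, β, γ, hv3, hveq, hNv, hbg, hub, hug,
      tri G hlnf hv3 huv.symm hvb hub, tri G hlnf hv3 huv.symm hvg hug,
      hmemA β hvb, hmemA γ hvg, huv.symm, hvb, hvg⟩
  -- pick x in RR
  obtain ⟨x, hx⟩ := Finset.card_pos.1 (by omega : 0 < (RR G).card)
  have hxdT : dTf G x = 0 := ((mem_RR G).1 hx).2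
  have hxdeg : ¬ G.degree x = 3 := ((mem_RR G).1 hx).1
  have hxNT : ∀ w, G.Adj x w → ¬ G.degree w = 3 := by
    intro w hw h3
    have hm : w ∈ G.neighborFinset x ∩ TT G := by
      rw [Finset.mem_inter, G.mem_neighborFinset, mem_TT]; exact ⟨hw, h3⟩
    exact Finset.card_ne_zero_of_mem hm hxdT
  have hAR : ∀ a b, a ∈ AA G → b ∈ RR G → a ≠ b := by
    intro a b haA hbR h
    subst h
    exact ((mem_AA G).1 haA).2 ((mem_RR G).1 hbR).2
  have hclass : ∀ w, G.Adj x w → w ∈ AA G ∨ w ∈ RR G := by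
    intro w hw
    by_cases h0 : dTf G w = 0
    · right; rw [mem_RR]; exact ⟨hxNT w hw, h0⟩
    · left; rw [mem_AA]; exact ⟨hxNT w hw, h0⟩
  -- each AA vertex has at most one RR neighbor
  have hLR : ∀ u, u ∈ AA G → ∀ w1 w2, G.Adj u w1 → G.Adj u w2 →
      w1 ∈ RR G → w2 ∈ RR G → w1 = w2 := by
    intro u hu w1 w2 h1 h2 hw1 hw2
    by_contra hne
    obtain ⟨v, β, γ, hv3, hNuT, hNv, hbg, hub, hug, hadjb, hadjg, hβA, hγA, hvu, hvb, hvg⟩ :=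
      strA u hu
    have hm : ∀ z, G.Adj u z → ¬ G.degree z = 3 → z ∈ G.neighborFinset u \ TT G := by
      intro z hz hz3
      rw [Finset.mem_sdiff, G.mem_neighborFinset, mem_TT]; exact ⟨hz, hz3⟩
    have hβw1 : β ≠ w1 := hAR β w1 hβA hw1
    have hβw2 : β ≠ w2 := hAR β w2 hβA hw2
    have hγw1 : γ ≠ w1 := hAR γ w1 hγA hw1
    have hγw2 : γ ≠ w2 := hAR γ w2 hγA hw2
    have hsub : ({β, γ, w1, w2} : Finset (Fin (8*k+3))) ⊆ G.neighborFinset u \ TT G := by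
      intro z hz
      simp only [Finset.mem_insert, Finset.mem_singleton] at hz
      rcases hz with rfl | rfl | rfl | rfl
      · exact hm z hadjb ((mem_AA G).1 hβA).1
      · exact hm z hadjg ((mem_AA G).1 hγA).1
      · exact hm z h1 ((mem_RR G).1 hw1).1
      · exact hm z h2 ((mem_RR G).1 hw2).1
    have hc4 : ({β, γ, w1, w2} : Finset (Fin (8*k+3))).card = 4 := by
      rw [Finset.card_insert_of_notMem (by simp [hbg, hβw1, hβw2]),
        Finset.card_insert_of_notMem (by simp [hγw1, hγw2]),
        Finset.card_insert_of_notMem (by simp [hne]), Finset.card_singleton]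
    have hle := Finset.card_le_card hsub
    have hbu := hbbf3 u hu
    rw [hc4] at hle
    have : (G.neighborFinset u \ TT G).card = 3 := hbu
    omega
  -- master claim about a cherry in N(x)
  have hmaster : ∀ p y1 y2 : Fin (8*k+3), G.Adj x p → G.Adj x y1 → G.Adj x y2 →
      G.Adj p y1 → G.Adj p y2 → y1 ≠ y2 → False := by
    intro p y1 y2 hxp hxy1 hxy2 hpy1 hpy2 hy12
    rcases hclass p hxp with hpA | hpR
    · -- p ∈ AA : leads to a separating vertex x
      obtain ⟨v, β, γ, hv3, hNpT, hNv, hbg, hpb, hpg, hadjb, hadjg, hβA, hγA, hvp, hvb, hvg⟩ :=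
        strA p hpA
      have hβx : β ≠ x := hAR β x hβA hx
      have hγx : γ ≠ x := hAR γ x hγA hx
      have hpx : p ≠ x := hAR p x hpA hx
      -- N p \ TT = {β, γ, x}
      have hNpS : G.neighborFinset p \ TT G = {β, γ, x} := by
        have hsub : ({β, γ, x} : Finset (Fin (8*k+3))) ⊆ G.neighborFinset p \ TT G := by
          intro z hz
          simp only [Finset.mem_insert, Finset.mem_singleton] at hz
          rw [Finset.mem_sdiff, G.mem_neighborFinset, mem_TT]
          rcases hz with rfl | rfl | rfl
          · exact ⟨hadjb, ((mem_AA G).1 hβA).1⟩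
          · exact ⟨hadjg, ((mem_AA G).1 hγA).1⟩
          · exact ⟨hxp.symm, hxdeg⟩
        refine (Finset.eq_of_subset_of_card_le hsub ?_).symm
        have h1 : ({β, γ, x} : Finset (Fin (8*k+3))).card = 3 := by
          rw [Finset.card_insert_of_notMem (by simp [hbg, hβx]),
            Finset.card_insert_of_notMem (by simp [hγx]), Finset.card_singleton]
        have h2 : (G.neighborFinset p \ TT G).card = 3 := hbbf3 p hpA
        omega
      -- y1, y2 ∈ {β, γ}
      have hymem : ∀ y, G.Adj x y → G.Adj p y → y = β ∨ y = γ := by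
        intro y hxy hpy
        have hm : y ∈ G.neighborFinset p \ TT G := by
          rw [Finset.mem_sdiff, G.mem_neighborFinset, mem_TT]
          exact ⟨hpy, hxNT y hxy⟩
        rw [hNpS] at hm
        simp only [Finset.mem_insert, Finset.mem_singleton] at hm
        rcases hm with rfl | rfl | rfl
        · exact Or.inl rfl
        · exact Or.inr rfl
        · exact absurd rfl hxy.ne
      have hxβγ : G.Adj x β ∧ G.Adj x γ := by
        rcases hymem y1 hxy1 hpy1 with rfl | rfl <;> rcases hymem y2 hxy2 hpy2 with rfl | rfl
        · exact absurd rfl hy12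
        · exact ⟨hxy1, hxy2⟩
        · exact ⟨hxy2, hxy1⟩
        · exact absurd rfl hy12
      obtain ⟨hxb, hxg⟩ := hxβγ
      -- unique T-neighbor is v for β, γ
      have hsingle : ∀ z, z ∈ AA G → G.Adj z v → G.neighborFinset z ∩ TT G = {v} := by
        intro z hz hzv
        obtain ⟨w, hw⟩ := Finset.card_eq_one.1 (hdT1 z hz)
        have hvm : v ∈ G.neighborFinset z ∩ TT G := by
          rw [Finset.mem_inter, G.mem_neighborFinset, mem_TT]; exact ⟨hzv, hv3⟩
        rw [hw] at hvm
        rw [Finset.mem_singleton] at hvm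
        rw [hw, hvm]
      have hβp : G.Adj β p := tri G hlnf hv3 hvb hvp (Ne.symm hpb)
      have hγp : G.Adj γ p := tri G hlnf hv3 hvg hvp (Ne.symm hpg)
      have hβγ : G.Adj β γ := tri G hlnf hv3 hvb hvg hbg
      have hβγdist : β ≠ γ := hbg
      -- N β \ TT = {p, γ, x}
      have hNsdiff : ∀ z w1 w2, z ∈ AA G → G.Adj z w1 → G.Adj z w2 → G.Adj z x →
          w1 ∈ AA G → w2 ∈ AA G → w1 ≠ w2 →
          G.neighborFinset z \ TT G = {w1, w2, x} := by
        intro z w1 w2 hzA hzw1 hzw2 hzx hw1A hw2A hw12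
        have hsub : ({w1, w2, x} : Finset (Fin (8*k+3))) ⊆ G.neighborFinset z \ TT G := by
          intro q hq
          simp only [Finset.mem_insert, Finset.mem_singleton] at hq
          rw [Finset.mem_sdiff, G.mem_neighborFinset, mem_TT]
          rcases hq with rfl | rfl | rfl
          · exact ⟨hzw1, ((mem_AA G).1 hw1A).1⟩
          · exact ⟨hzw2, ((mem_AA G).1 hw2A).1⟩
          · exact ⟨hzx, hxdeg⟩
        refine (Finset.eq_of_subset_of_card_le hsub ?_).symm
        have h1 : ({w1, w2, x} : Finset (Fin (8*k+3))).card = 3 := by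
          rw [Finset.card_insert_of_notMem
              (by simp [hw12, hAR w1 x hw1A hx]),
            Finset.card_insert_of_notMem (by simp [hAR w2 x hw2A hx]),
            Finset.card_singleton]
        have h2 : (G.neighborFinset z \ TT G).card = 3 := hbbf3 z hzA
        omega
      have hNβS : G.neighborFinset β \ TT G = {p, γ, x} :=
        hNsdiff β p γ hβA hβp hβγ hxb.symm hpA hγA hpg
      have hNγS : G.neighborFinset γ \ TT G = {p, β, x} :=
        hNsdiff γ p β hγA hγp hβγ.symm hxg.symm hpA hβA hpb
      have hNβT : G.neighborFinset β ∩ TT G = {v} := hsingle β hβA hvb.symm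
      have hNγT : G.neighborFinset γ ∩ TT G = {v} := hsingle γ hγA hvg.symm
      -- closure
      have hclosure : ∀ z w', (z = v ∨ z = p ∨ z = β ∨ z = γ) → G.Adj z w' →
          w' = x ∨ (w' = v ∨ w' = p ∨ w' = β ∨ w' = γ) := by
        intro z w' hz hadj
        have hgen : ∀ (sT sS : Finset (Fin (8*k+3))),
            G.neighborFinset z ∩ TT G = sT → G.neighborFinset z \ TT G = sS →
            w' ∈ sT ∪ sS := by
          intro sT sS h1 h2
          rw [← h1, ← h2]
          by_cases h3 : G.degree w' = 3
          · rw [Finset.mem_union]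
            left
            rw [Finset.mem_inter, G.mem_neighborFinset, mem_TT]
            exact ⟨hadj, h3⟩
          · rw [Finset.mem_union]
            right
            rw [Finset.mem_sdiff, G.mem_neighborFinset, mem_TT]
            exact ⟨hadj, h3⟩
        rcases hz with rfl | rfl | rfl | rfl
        · -- z = v
          have : w' ∈ G.neighborFinset z := (G.mem_neighborFinset z w').2 hadj
          rw [hNv] at this
          simp only [Finset.mem_insert, Finset.mem_singleton] at this
          rcases this with rfl | rfl | rfl
          · exact Or.inr (Or.inr (Or.inl rfl))
          · exact Or.inr (Or.inr (Or.inr (Or.inl rfl)))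
          · exact Or.inr (Or.inr (Or.inr (Or.inr rfl)))
        · have := hgen {v} {β, γ, x} hNpT hNpS
          simp only [Finset.mem_union, Finset.mem_insert, Finset.mem_singleton] at this
          rcases this with rfl | rfl | rfl | rfl
          · exact Or.inr (Or.inl rfl)
          · exact Or.inr (Or.inr (Or.inr (Or.inl rfl)))
          · exact Or.inr (Or.inr (Or.inr (Or.inr rfl)))
          · exact Or.inl rfl
        · have := hgen {v} {p, γ, x} hNβT hNβS
          simp only [Finset.mem_union, Finset.mem_insert, Finset.mem_singleton] at this
          rcases this with rfl | rfl | rfl | rfl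
          · exact Or.inr (Or.inl rfl)
          · exact Or.inr (Or.inr (Or.inl rfl))
          · exact Or.inr (Or.inr (Or.inr (Or.inr rfl)))
          · exact Or.inl rfl
        · have := hgen {v} {p, β, x} hNγT hNγS
          simp only [Finset.mem_union, Finset.mem_insert, Finset.mem_singleton] at this
          rcases this with rfl | rfl | rfl | rfl
          · exact Or.inr (Or.inl rfl)
          · exact Or.inr (Or.inr (Or.inl rfl))
          · exact Or.inr (Or.inr (Or.inr (Or.inl rfl)))
          · exact Or.inl rfl
      -- witness
      obtain ⟨z0, hz0⟩ := exists_outside ({v, p, β, γ, x} : Finset (Fin (8*k+3))) (by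
        have i1 := Finset.card_insert_le v ({p, β, γ, x} : Finset (Fin (8*k+3)))
        have i2 := Finset.card_insert_le p ({β, γ, x} : Finset (Fin (8*k+3)))
        have i3 := Finset.card_insert_le β ({γ, x} : Finset (Fin (8*k+3)))
        have i4 := Finset.card_insert_le γ ({x} : Finset (Fin (8*k+3)))
        simp only [Finset.card_singleton] at i1 i2 i3 i4
        omega)
      simp only [Finset.mem_insert, Finset.mem_singleton, not_or] at hz0
      obtain ⟨hz0v, hz0p, hz0β, hz0γ, hz0x⟩ := hz0
      have hvx : v ≠ x := fun h => hxdeg (h ▸ hv3)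
      refine surgery G h3c {x} (by simp)
        (fun z => z = v ∨ z = p ∨ z = β ∨ z = γ) ?_ ?_ v (Or.inl rfl) z0 ?_ ?_
      · rintro z (rfl | rfl | rfl | rfl) <;> simp only [Finset.mem_singleton]
        · exact hvx
        · exact hpx
        · exact hβx
        · exact hγx
      · intro a b' hadj haC hbS
        rcases hclosure a b' haC hadj with rfl | h
        · exact absurd (Finset.mem_singleton_self b') hbS
        · exact h
      · rintro (rfl | rfl | rfl | rfl)
        · exact hz0v rfl
        · exact hz0p rfl
        · exact hz0β rfl
        · exact hz0γ rfl
      · simp only [Finset.mem_singleton]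
        exact hz0x
    · -- p ∈ RR : four distinct RR vertices
      have hRRmem : ∀ y, G.Adj x y → G.Adj p y → y ∈ RR G := by
        intro y hxy hpy
        rcases hclass y hxy with hyA | hyR
        · exfalso
          have := hLR y hyA x p hxy.symm hpy.symm hx hpR
          exact hxp.ne this
        · exact hyR
      have hy1R : y1 ∈ RR G := hRRmem y1 hxy1 hpy1
      have hy2R : y2 ∈ RR G := hRRmem y2 hxy2 hpy2
      have hsub : ({x, p, y1, y2} : Finset (Fin (8*k+3))) ⊆ RR G := by
        intro z hz
        simp only [Finset.mem_insert, Finset.mem_singleton] at hz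
        rcases hz with rfl | rfl | rfl | rfl
        · exact hx
        · exact hpR
        · exact hy1R
        · exact hy2R
      have hc4 : ({x, p, y1, y2} : Finset (Fin (8*k+3))).card = 4 := by
        rw [Finset.card_insert_of_notMem (by simp [hxp.ne, hxy1.ne, hxy2.ne]),
          Finset.card_insert_of_notMem (by simp [hpy1.ne, hpy2.ne]),
          Finset.card_insert_of_notMem (by simp [hy12]), Finset.card_singleton]
      have := Finset.card_le_card hsub
      omega

  obtain ⟨a0, b0, c0, hac0, hab0, hbc0⟩ := cyc1 (hlnf x)
  have hab0' : G.Adj (a0 : Fin (8*k+3)) (b0 : Fin (8*k+3)) := by simpa using hab0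
  have hbc0' : G.Adj (b0 : Fin (8*k+3)) (c0 : Fin (8*k+3)) := by simpa using hbc0
  exact hmaster b0 a0 c0 b0.2 a0.2 c0.2 hab0'.symm hbc0' (fun h => hac0 (Subtype.ext h))
end Main5
theorem stmt12 (k : ℕ) (hk : 1 ≤ k) :
    ¬ ∃ G : SimpleGraph (Fin (8 * k + 3)), ThreeConnected G ∧ LocallyNonforesty G ∧
      G.edgeSet.ncard = 15 * k + 6 := by
  rintro ⟨G, h3c, hlnf, he⟩
  letI : DecidableRel G.Adj := Classical.decRel _
  obtain ⟨hpart, hdTA, haleq, hB, hD, hmain⟩ := counts G hk h3c hlnf he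
  have ht : (TT G).card = 2*k ∨ (TT G).card = 2*k+1 := by omega
  rcases ht with ht | ht
  · exact caseB G hk h3c hlnf he ht
  · exact caseA G hk h3c hlnf he ht
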